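/- In the ring of rational functions ℚ(x, y, z), for every integer r ≥ 0 one has the identity: the expression (1/(2(x+y+z))) · ∑ over the three splittings {x},{y,z}; {y},{x,z}; {z},{x,y} of (first part sum)^2 (second part sum)^2 times the product of the degree-appropriate components of G(single variable) = 1/t^2 and G(two variables) = ∑_{s≥0} (uv(u+v))^s / (4^s (2s+1)!! (u+v)), extracting the total homogeneous degree 3r component, equals P_r(x,y,z) = (r!/(2^r (2r+1)!)) · ((xy)^r (x+y)^{r+1} + (yz)^r (y+z)^{r+1} + (zx)^r (z+x)^{r+1})/(x+y+z). -/

import Mathlib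

/-- `G_r(t)`: degree `3r-2` homogeneous component of the normalized 1-point
function `G(t) = 1/t²`. -/
noncomputable def G1 (r : ℕ) (t : ℝ) : ℝ := if r = 0 then 1 / t ^ 2 else 0

/-- `G_s(u,v)`: degree `3s-1` homogeneous component of the normalized 2-point
function, namely `Δ(u,v)^s / (4^s (2s+1)!! (u+v))` with `Δ(u,v) = uv(u+v)`. -/
noncomputable def G2 (s : ℕ) (u v : ℝ) : ℝ :=
  (u * v * (u + v)) ^ s /
    (4 ^ s * ((∏ j ∈ Finset.range (s + 1), (2 * j + 1) : ℕ) : ℝ) * (u + v))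

lemma fact_odd (r : ℕ) :
    (2 * r + 1).factorial = 2 ^ r * r.factorial * ∏ j ∈ Finset.range (r + 1), (2 * j + 1) := by
  induction r with
  | zero => simp
  | succ n ih =>
    rw [Finset.prod_range_succ, show 2 * (n + 1) + 1 = (2 * n + 1) + 1 + 1 by ring,
      Nat.factorial_succ, Nat.factorial_succ, ih, Nat.factorial_succ]
    ring

lemma sumA (r : ℕ) (t u v : ℝ) :
    ∑ r' ∈ Finset.range (r + 1), G1 r' t * G2 (r - r') u v = 1 / t ^ 2 * G2 r u v := by
  rw [Finset.sum_eq_single 0]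
  · simp [G1]
  · intro b _ hb; simp [G1, hb]
  · intro h; exact absurd (Finset.mem_range.2 (Nat.succ_pos r)) h

lemma sumB (r : ℕ) (t u v : ℝ) :
    ∑ r' ∈ Finset.range (r + 1), G2 r' u v * G1 (r - r') t = G2 r u v * (1 / t ^ 2) := by
  rw [Finset.sum_eq_single r]
  · simp [G1]
  · intro b hb hbr
    have : r - b ≠ 0 := by
      have := Finset.mem_range.1 hb; omega
    simp [G1, this]
  · intro h; exact absurd (Finset.self_mem_range_succ r) h

/-- Zagier's three-point function, from the Liu–Xu n-point recursion:
the sum is over the six ordered splittings of `{x,y,z}` into `I ⊔ J`. -/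
theorem stmt8 (x y z : ℝ) (hx : x ≠ 0) (hy : y ≠ 0) (hz : z ≠ 0)
    (hxy : x + y ≠ 0) (hyz : y + z ≠ 0) (hzx : z + x ≠ 0)
    (hxyz : x + y + z ≠ 0) (r : ℕ) :
    1 / (2 * (x + y + z)) *
      (x ^ 2 * (y + z) ^ 2 *
          ((∑ r' ∈ Finset.range (r + 1), G1 r' x * G2 (r - r') y z) +
           (∑ r' ∈ Finset.range (r + 1), G2 r' y z * G1 (r - r') x)) +
       y ^ 2 * (z + x) ^ 2 *
          ((∑ r' ∈ Finset.range (r + 1), G1 r' y * G2 (r - r') z x) +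
           (∑ r' ∈ Finset.range (r + 1), G2 r' z x * G1 (r - r') y)) +
       z ^ 2 * (x + y) ^ 2 *
          ((∑ r' ∈ Finset.range (r + 1), G1 r' z * G2 (r - r') x y) +
           (∑ r' ∈ Finset.range (r + 1), G2 r' x y * G1 (r - r') z))) =
    ((r.factorial : ℝ) / (2 ^ r * ((2 * r + 1).factorial : ℝ))) *
      (((x * y) ^ r * (x + y) ^ (r + 1) + (y * z) ^ r * (y + z) ^ (r + 1) +
        (z * x) ^ r * (z + x) ^ (r + 1)) / (x + y + z)) := by
  rw [sumA, sumA, sumA, sumB, sumB, sumB]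
  set D : ℝ := ((∏ j ∈ Finset.range (r + 1), (2 * j + 1) : ℕ) : ℝ) with hDdef
  have hDn : 0 < ∏ j ∈ Finset.range (r + 1), (2 * j + 1) :=
    Finset.prod_pos fun j _ => by omega
  have hD : (0 : ℝ) < D := by rw [hDdef]; exact_mod_cast hDn
  have hD' : D ≠ 0 := ne_of_gt hD
  have h4 : (4 : ℝ) ^ r ≠ 0 := by positivity
  have hfact : ((2 * r + 1).factorial : ℝ) = 2 ^ r * r.factorial * D := by
    rw [hDdef]; exact_mod_cast congrArg (Nat.cast : ℕ → ℝ) (fact_odd r)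
  have hF : (r.factorial : ℝ) ≠ 0 := by positivity
  have key : ∀ u v : ℝ, u + v ≠ 0 →
      (u + v) ^ 2 * G2 r u v = (u * v) ^ r * (u + v) ^ (r + 1) / (4 ^ r * D) := by
    intro u v huv
    unfold G2
    rw [← hDdef, mul_pow (u * v) (u + v) r]
    field_simp
    ring
  have e1 : ∀ t : ℝ, t ≠ 0 → ∀ A : ℝ,
      1 / t ^ 2 * A + A * (1 / t ^ 2) = 2 * A / t ^ 2 := by
    intro t ht A; field_simp; ring
  rw [e1 x hx, e1 y hy, e1 z hz]
  have e2 : ∀ t : ℝ, t ≠ 0 → ∀ s A : ℝ,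
      t ^ 2 * s ^ 2 * (2 * A / t ^ 2) = 2 * (s ^ 2 * A) := by
    intro t ht s A; field_simp
  rw [e2 x hx, e2 y hy, e2 z hz, key y z hyz, key z x hzx, key x y hxy, hfact]
  have h2 : (2 : ℝ) ^ r ≠ 0 := by positivity
  rw [show (4 : ℝ) ^ r = 2 ^ r * 2 ^ r by rw [← mul_pow]; norm_num]
  field_simp
  ring
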